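/- For all integers 1 ≤ ℓ ≤ n one has 2^{ℓ/2} · Γ_ℓ((n+1)/2) / Γ_ℓ(n/2) = (n!/(n−ℓ)!) · κ_n / ((2π)^{ℓ/2} · κ_{n−ℓ}), where κ_m := π^{m/2} / Γ(1 + m/2) is the volume of the unit ball in ℝ^m (with κ_0 = 1). -/

import Mathlib

noncomputable section

/-- The multivariate Gamma function `Γ_ℓ(a) = π^{ℓ(ℓ-1)/4} ∏_{i=1}^{ℓ} Γ(a - (i-1)/2)`. -/
def multivariateGamma (ℓ : ℕ) (a : ℝ) : ℝ :=
  Real.pi ^ ((ℓ : ℝ) * ((ℓ : ℝ) - 1) / 4) *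
    ∏ i ∈ Finset.range ℓ, Real.Gamma (a - (i : ℝ) / 2)

/-- `κ_m = π^{m/2} / Γ(1 + m/2)`, the volume of the unit ball in `ℝ^m`. -/
def unitBallVolume (m : ℕ) : ℝ :=
  Real.pi ^ ((m : ℝ) / 2) / Real.Gamma (1 + (m : ℝ) / 2)

lemma key (n ℓ : ℕ) (h : ℓ ≤ n) :
    (2:ℝ)^ℓ * (∏ i ∈ Finset.range ℓ, Real.Gamma (((n:ℝ)+1)/2 - (i:ℝ)/2)) *
        Real.Gamma (1+(n:ℝ)/2) * ((n-ℓ).factorial : ℝ)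
  = (n.factorial : ℝ) * Real.Gamma (1+((n:ℝ)-(ℓ:ℝ))/2) *
      ∏ i ∈ Finset.range ℓ, Real.Gamma ((n:ℝ)/2 - (i:ℝ)/2) := by
  induction ℓ with
  | zero => simp; ring
  | succ ℓ IH =>
    have hℓn : ℓ ≤ n := le_of_lt h
    have IH := IH hℓn
    have hnl : (1:ℝ) ≤ (n:ℝ) - (ℓ:ℝ) := by
      have : (ℓ:ℝ) + 1 ≤ n := by exact_mod_cast h
      linarith
    have hne : ((n:ℝ) - (ℓ:ℝ)) ≠ 0 := by linarith
    have hne2 : ((n:ℝ) - (ℓ:ℝ))/2 ≠ 0 := by positivity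
    have h1 : n - ℓ = (n - (ℓ+1)) + 1 := by omega
    have fF : (((n-ℓ).factorial : ℕ) : ℝ) = ((n:ℝ) - (ℓ:ℝ)) * ((n-(ℓ+1)).factorial : ℝ) := by
      rw [h1, Nat.factorial_succ]
      push_cast [Nat.cast_sub h]
      ring
    have gG : Real.Gamma (1+((n:ℝ)-(ℓ:ℝ))/2)
        = (((n:ℝ)-(ℓ:ℝ))/2) * Real.Gamma ((n:ℝ)/2 - (ℓ:ℝ)/2) := by
      rw [show (n:ℝ)/2 - (ℓ:ℝ)/2 = ((n:ℝ)-(ℓ:ℝ))/2 by ring, add_comm, Real.Gamma_add_one hne2]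
    have hG' : Real.Gamma (1+((n:ℝ)-((ℓ:ℝ)+1))/2)
        = Real.Gamma (((n:ℝ)+1)/2 - (ℓ:ℝ)/2) := by
      congr 1; push_cast; ring
    rw [fF, gG] at IH
    rw [Finset.prod_range_succ, Finset.prod_range_succ]
    push_cast at IH ⊢
    rw [hG']
    apply mul_left_cancel₀ hne
    linear_combination 2 * Real.Gamma (((n:ℝ)+1)/2 - (ℓ:ℝ)/2) * IH

/-- For all integers `1 ≤ ℓ ≤ n`:
`2^{ℓ/2} Γ_ℓ((n+1)/2)/Γ_ℓ(n/2) = (n!/(n−ℓ)!) κ_n / ((2π)^{ℓ/2} κ_{n−ℓ})`. -/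
theorem statement_3 (ℓ n : ℕ) (hℓ : 1 ≤ ℓ) (hn : ℓ ≤ n) :
    (2 : ℝ) ^ ((ℓ : ℝ) / 2) * multivariateGamma ℓ (((n : ℝ) + 1) / 2)
        / multivariateGamma ℓ ((n : ℝ) / 2)
      = ((n.factorial : ℝ) / ((n - ℓ).factorial : ℝ)) * unitBallVolume n
          / ((2 * Real.pi) ^ ((ℓ : ℝ) / 2) * unitBallVolume (n - ℓ)) := by
  have hπ := Real.pi_pos
  have hkey := key n ℓ hn
  have hcast : (((n - ℓ : ℕ)) : ℝ) = (n:ℝ) - (ℓ:ℝ) := by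
    push_cast [Nat.cast_sub hn]; ring
  rw [multivariateGamma, multivariateGamma, unitBallVolume, unitBallVolume, hcast]
  have hmul : (2 * Real.pi) ^ ((ℓ:ℝ)/2) = 2 ^ ((ℓ:ℝ)/2) * Real.pi ^ ((ℓ:ℝ)/2) :=
    Real.mul_rpow (by norm_num) hπ.le
  have h2 : ((2:ℝ)^(ℓ:ℕ)) = 2 ^ ((ℓ:ℝ)/2) * 2 ^ ((ℓ:ℝ)/2) := by
    rw [← Real.rpow_natCast 2 ℓ, ← Real.rpow_add two_pos]; ring_nf
  have hπsplit : Real.pi ^ ((n:ℝ)/2) = Real.pi ^ ((ℓ:ℝ)/2) * Real.pi ^ (((n:ℝ)-(ℓ:ℝ))/2) := by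
    rw [← Real.rpow_add hπ]; ring_nf
  rw [hmul, hπsplit]
  rw [h2] at hkey
  have hPnum : (0:ℝ) < ∏ i ∈ Finset.range ℓ, Real.Gamma (((n:ℝ)+1)/2 - (i:ℝ)/2) := by
    apply Finset.prod_pos
    intro i hi
    have : i < ℓ := Finset.mem_range.mp hi
    have : (i:ℝ) < n := by exact_mod_cast lt_of_lt_of_le this hn
    exact Real.Gamma_pos_of_pos (by linarith)
  have hPden : (0:ℝ) < ∏ i ∈ Finset.range ℓ, Real.Gamma ((n:ℝ)/2 - (i:ℝ)/2) := by
    apply Finset.prod_pos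
    intro i hi
    have h1 : i < ℓ := Finset.mem_range.mp hi
    have : (i:ℝ) + 1 ≤ n := by exact_mod_cast lt_of_lt_of_le h1 hn
    exact Real.Gamma_pos_of_pos (by linarith)
  have hΓn : (0:ℝ) < Real.Gamma (1 + (n:ℝ)/2) := Real.Gamma_pos_of_pos (by positivity)
  have hΓm : (0:ℝ) < Real.Gamma (1 + ((n:ℝ)-(ℓ:ℝ))/2) := by
    apply Real.Gamma_pos_of_pos
    have : (ℓ:ℝ) ≤ n := by exact_mod_cast hn
    linarith
  have hF : (0:ℝ) < ((n-ℓ).factorial : ℝ) := by exact_mod_cast Nat.factorial_pos _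
  have hc : (0:ℝ) < Real.pi ^ ((ℓ:ℝ)*((ℓ:ℝ)-1)/4) := Real.rpow_pos_of_pos hπ _
  have h2half : (0:ℝ) < (2:ℝ) ^ ((ℓ:ℝ)/2) := Real.rpow_pos_of_pos two_pos _
  have hπl : (0:ℝ) < Real.pi ^ ((ℓ:ℝ)/2) := Real.rpow_pos_of_pos hπ _
  have hπm : (0:ℝ) < Real.pi ^ (((n:ℝ)-(ℓ:ℝ))/2) := Real.rpow_pos_of_pos hπ _
  set P : ℝ := ∏ i ∈ Finset.range ℓ, Real.Gamma (((n:ℝ)+1)/2 - (i:ℝ)/2) with hP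
  set Q : ℝ := ∏ i ∈ Finset.range ℓ, Real.Gamma ((n:ℝ)/2 - (i:ℝ)/2) with hQ
  set G1 : ℝ := Real.Gamma (1 + (n:ℝ)/2) with hG1
  set G2 : ℝ := Real.Gamma (1 + ((n:ℝ)-(ℓ:ℝ))/2) with hG2
  set F : ℝ := ((n-ℓ).factorial : ℝ) with hFd
  set c : ℝ := Real.pi ^ ((ℓ:ℝ)*((ℓ:ℝ)-1)/4) with hcd
  set t : ℝ := (2:ℝ) ^ ((ℓ:ℝ)/2) with htd
  set pl : ℝ := Real.pi ^ ((ℓ:ℝ)/2) with hpld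
  set pm : ℝ := Real.pi ^ (((n:ℝ)-(ℓ:ℝ))/2) with hpmd
  field_simp
  linear_combination hkey
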